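/- Let X be a compact Hausdorff space, let p, q ∈ C(X, 𝒦) be projections with [p] ≤ n[1_X] in the Cuntz/Murray–von Neumann sense, and suppose there exists v ∈ q C(X,𝒦) p such that v(x) ≠ 0 for all x ∈ X. Then [1_X] ≤ n[q], i.e., the trivial line bundle embeds in the n-fold direct sum of the bundle of q. -/

import Mathlib

/-- `ℓ²`: the Hilbert space of square-summable complex sequences. -/
noncomputable abbrev HilbL2 : Type := lp (fun _ : ℕ => ℂ) 2

/-- Bounded operators on `ℓ²`. -/
noncomputable abbrev BL2 : Type := HilbL2 →L[ℂ] HilbL2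

variable {X : Type*} [TopologicalSpace X]

/-- A continuous `B(ℓ²)`-valued function with compact operator values, i.e. an element
of `C(X, 𝒦)`. -/
def CompactValued (f : C(X, BL2)) : Prop := ∀ x, IsCompactOperator (f x)

/-- `[p] ≤ n[q]`: `p` is Murray–von Neumann subequivalent, within `C(X, 𝒦)`, to a direct
sum of `n` copies of `q`; witnessed by a column `v = (v₁, …, vₙ)` with `Σ vᵢ* vᵢ = p` and
`q vᵢ = vᵢ`. -/
def MvNLE (p : C(X, BL2)) (n : ℕ) (q : C(X, BL2)) : Prop :=
  ∃ v : Fin n → C(X, BL2), (∀ i, CompactValued (v i)) ∧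
    (∀ x, ∑ i, star ((v i) x) * (v i) x = p x) ∧
    (∀ i x, q x * (v i) x = (v i) x)

set_option synthInstance.maxHeartbeats 1000000 in
set_option maxHeartbeats 1000000 in
/-- A rank-one self-adjoint projection is given by a unit vector. -/
lemma rankone_exists (e : BL2) (hsa : IsSelfAdjoint e) (hidem : e * e = e)
    (hr : Module.finrank ℂ (LinearMap.range (e : HilbL2 →ₗ[ℂ] HilbL2)) = 1) :
    ∃ ξ : HilbL2, ‖ξ‖ = 1 ∧ ∀ η, e η = (inner ℂ ξ η : ℂ) • ξ := by
  obtain ⟨ξ₀, hξ₀ne, hspan⟩ := finrank_eq_one_iff'.mp hr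
  have hξ₁ne : (ξ₀ : HilbL2) ≠ 0 := fun h => hξ₀ne (Subtype.ext h)
  set c : ℂ := ((‖(ξ₀ : HilbL2)‖⁻¹ : ℝ) : ℂ)
  set ξ : HilbL2 := c • (ξ₀ : HilbL2) with hξdef
  have hcne : c ≠ 0 := by
    simp [c, Complex.ofReal_ne_zero, inv_ne_zero, norm_ne_zero_iff, hξ₁ne]
  have hξnorm : ‖ξ‖ = 1 := by
    rw [hξdef, norm_smul]
    simp [c, norm_ne_zero_iff.mpr hξ₁ne]
  have hfix : ∀ y, y ∈ LinearMap.range (e : HilbL2 →ₗ[ℂ] HilbL2) → e y = y := by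
    rintro y ⟨z, rfl⟩
    have : (e * e) z = e z := by rw [hidem]
    simpa [ContinuousLinearMap.mul_apply] using this
  have hξmem : ξ ∈ LinearMap.range (e : HilbL2 →ₗ[ℂ] HilbL2) :=
    Submodule.smul_mem _ c ξ₀.2
  have heξ : e ξ = ξ := hfix ξ hξmem
  have hinnerξ : (inner ℂ ξ ξ : ℂ) = 1 := by
    rw [inner_self_eq_norm_sq_to_K, hξnorm]; norm_num
  refine ⟨ξ, hξnorm, fun η => ?_⟩
  -- e η lies in the range, hence is a multiple of ξ
  obtain ⟨d, hd⟩ := hspan ⟨e η, ⟨η, rfl⟩⟩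
  have hd' : e η = (d * c⁻¹) • ξ := by
    have : (d : ℂ) • (ξ₀ : HilbL2) = e η := congrArg Subtype.val hd
    rw [← this, hξdef, smul_smul]
    congr 1
    field_simp
  set d' : ℂ := d * c⁻¹
  have hinner : (inner ℂ ξ (e η) : ℂ) = d' := by
    rw [hd', inner_smul_right, hinnerξ, mul_one]
  have hsa' : (inner ℂ ξ (e η) : ℂ) = inner ℂ ξ η := by
    rw [← ContinuousLinearMap.adjoint_inner_left, hsa.adjoint_eq, heξ]
  rw [hd', ← hinner, hsa']

/-- A rank-one operator is compact. -/
lemma rankone_compact (e : BL2) (ξ : HilbL2) (hξ : ‖ξ‖ = 1)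
    (he : ∀ η, e η = (inner ℂ ξ η : ℂ) • ξ) : IsCompactOperator ⇑e := by
  refine ⟨(fun c : ℂ => c • ξ) '' Metric.closedBall 0 1, ?_, ?_⟩
  · exact (isCompact_closedBall 0 1).image (continuous_id.smul continuous_const)
  · refine Filter.mem_of_superset (Metric.closedBall_mem_nhds 0 one_pos) ?_
    intro η hη
    refine ⟨inner ℂ ξ η, ?_, (he η).symm⟩
    simp only [Metric.mem_closedBall, dist_zero_right] at hη ⊢
    calc ‖(inner ℂ ξ η : ℂ)‖ ≤ ‖ξ‖ * ‖η‖ := norm_inner_le_norm _ _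
    _ ≤ 1 := by rw [hξ, one_mul]; exact hη

set_option maxHeartbeats 2000000 in
/-- Let `X` be compact Hausdorff, `p, q` projections in `C(X, 𝒦)` with `[p] ≤ n[1_X]`,
where `1_X` is the constant rank-one projection.  If there is `v ∈ q C(X,𝒦) p` with
`v(x) ≠ 0` for all `x`, then `[1_X] ≤ n[q]`. -/
theorem mvNLE_one_of_full_element
    [CompactSpace X] [T2Space X]
    (e : BL2) (he_proj : IsSelfAdjoint e ∧ e * e = e)
    (he_rank : Module.finrank ℂ (LinearMap.range (e : HilbL2 →ₗ[ℂ] HilbL2)) = 1)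
    (p q : C(X, BL2))
    (hp : ∀ x, IsSelfAdjoint (p x) ∧ p x * p x = p x) (hpc : CompactValued p)
    (hq : ∀ x, IsSelfAdjoint (q x) ∧ q x * q x = q x) (hqc : CompactValued q)
    (n : ℕ) (hpn : MvNLE p n (ContinuousMap.const X e))
    (v : C(X, BL2)) (hv : ∀ x, q x * v x * p x = v x)
    (hvfull : ∀ x, v x ≠ 0) :
    MvNLE (ContinuousMap.const X e) n q := by
  obtain ⟨ξ, hξnorm, hξ⟩ := rankone_exists e he_proj.1 he_proj.2 he_rank
  have hecompact : IsCompactOperator ⇑e := rankone_compact e ξ hξnorm hξ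
  obtain ⟨w, hwc, hwsum, hwe⟩ := hpn
  have hwe' : ∀ i x, e * w i x = w i x := fun i x => hwe i x
  -- `star (w i x) * e = star (w i x)`
  have hstar_w : ∀ i x, star (w i x) * e = star (w i x) := by
    intro i x
    have := congrArg star (hwe' i x)
    rwa [star_mul, he_proj.1.star_eq] at this
  -- basic algebra with v
  have hvp : ∀ x, v x * p x = v x := by
    intro x
    conv_lhs => rw [← hv x]
    rw [mul_assoc, mul_assoc, (hp x).2, ← mul_assoc, hv x]
  have hqv : ∀ x, q x * v x = v x := by
    intro x
    conv_lhs => rw [← hv x]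
    rw [← mul_assoc, ← mul_assoc, (hq x).2, hv x]
  -- the column entries
  set b : Fin n → X → BL2 := fun i x => v x * star (w i x) with hbdef
  have hb_cont : ∀ i, Continuous (b i) := fun i =>
    v.continuous.mul ((w i).continuous.star)
  have hbξ : ∀ i x (η : HilbL2), b i x η = (inner ℂ ξ η : ℂ) • (b i x ξ) := by
    intro i x η
    have h1 : star (w i x) η = (inner ℂ ξ η : ℂ) • star (w i x) ξ := by
      conv_lhs => rw [← hstar_w i x]
      rw [ContinuousLinearMap.mul_apply, hξ η, map_smul]
    show (v x * star (w i x)) η = _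
    rw [ContinuousLinearMap.mul_apply, h1, map_smul]
    rfl
  -- star (b i x) absorbs e on the left
  have heb : ∀ i x, e * star (b i x) = star (b i x) := by
    intro i x
    show e * star (v x * star (w i x)) = star (v x * star (w i x))
    rw [star_mul, star_star, ← mul_assoc, hwe' i x]
  -- each term of the sum is a scalar times e
  have hterm : ∀ i x, star (b i x) * b i x = ((‖b i x ξ‖ ^ 2 : ℝ) : ℂ) • e := by
    intro i x
    ext η
    rw [ContinuousLinearMap.mul_apply, hbξ i x η, map_smul]
    have h2 : star (b i x) (b i x ξ) = ((‖b i x ξ‖ ^ 2 : ℝ) : ℂ) • ξ := by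
      have hmem : star (b i x) (b i x ξ) = e (star (b i x) (b i x ξ)) := by
        conv_rhs => rw [← ContinuousLinearMap.mul_apply, heb i x]
      have hin : (inner ℂ ξ (star (b i x) (b i x ξ)) : ℂ) = ((‖b i x ξ‖ ^ 2 : ℝ) : ℂ) := by
        rw [ContinuousLinearMap.star_eq_adjoint, ContinuousLinearMap.adjoint_inner_right]
        · rw [inner_self_eq_norm_sq_to_K]
          norm_cast
      rw [hmem, hξ, hin]
    rw [h2, ContinuousLinearMap.smul_apply, hξ η, smul_comm]
  -- the scalar function
  set Λ : X → ℝ := fun x => ∑ i, ‖b i x ξ‖ ^ 2 with hΛdef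
  have hΛcont : Continuous Λ :=
    continuous_finset_sum _ fun i _ => (((hb_cont i).clm_apply continuous_const).norm.pow 2)
  have hsum : ∀ x, ∑ i, star (b i x) * b i x = ((Λ x : ℝ) : ℂ) • e := by
    intro x
    rw [Finset.sum_congr rfl fun i _ => hterm i x, ← Finset.sum_smul, hΛdef]
    push_cast
    rfl
  have hΛpos : ∀ x, 0 < Λ x := by
    intro x
    rcases (Finset.sum_nonneg fun i _ => sq_nonneg ‖b i x ξ‖ :
        (0:ℝ) ≤ Λ x).lt_or_eq with h | h
    · exact h
    exfalso
    have hz : ∀ i, b i x ξ = 0 := by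
      intro i
      have := (Finset.sum_eq_zero_iff_of_nonneg fun i _ => sq_nonneg ‖b i x ξ‖).mp h.symm
        i (Finset.mem_univ i)
      simpa [pow_eq_zero_iff, norm_eq_zero] using this
    have hbz : ∀ i, b i x = 0 := by
      intro i
      ext η
      rw [hbξ i x η, hz i, smul_zero]
      rfl
    apply hvfull x
    have hvp0 : v x * p x = 0 := by
      rw [← hwsum x, Finset.mul_sum]
      refine Finset.sum_eq_zero fun i _ => ?_
      have hb0 : v x * star (w i x) = 0 := hbz i
      rw [← mul_assoc, hb0, zero_mul]
    rw [← hvp x, hvp0]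
  have hsqrt_ne : ∀ x, Real.sqrt (Λ x) ≠ 0 := fun x =>
    (Real.sqrt_pos.mpr (hΛpos x)).ne'
  -- the witness column
  refine ⟨fun i => ⟨fun x => (((Real.sqrt (Λ x))⁻¹ : ℝ) : ℂ) • b i x, ?_⟩, ?_, ?_, ?_⟩
  · exact (Complex.continuous_ofReal.comp
      ((Real.continuous_sqrt.comp hΛcont).inv₀ hsqrt_ne)).smul (hb_cont i)
  · -- compactness
    intro i x
    show IsCompactOperator ⇑((((Real.sqrt (Λ x))⁻¹ : ℝ) : ℂ) • b i x)
    have hbe : b i x = (v x * star (w i x)) * e := by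
      rw [mul_assoc, hstar_w i x]
    have h1 : IsCompactOperator ⇑(b i x) := by
      rw [hbe]
      exact hecompact.clm_comp (v x * star (w i x))
    exact h1.smul ((((Real.sqrt (Λ x))⁻¹ : ℝ) : ℂ))
  · -- the sum is e
    intro x
    show ∑ i, star ((((Real.sqrt (Λ x))⁻¹ : ℝ) : ℂ) • b i x) *
        ((((Real.sqrt (Λ x))⁻¹ : ℝ) : ℂ) • b i x) = e
    have hst : ∀ i, star ((((Real.sqrt (Λ x))⁻¹ : ℝ) : ℂ) • b i x) *
        ((((Real.sqrt (Λ x))⁻¹ : ℝ) : ℂ) • b i x)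
        = ((((Real.sqrt (Λ x))⁻¹ * (Real.sqrt (Λ x))⁻¹ : ℝ)) : ℂ) •
          (star (b i x) * b i x) := by
      intro i
      rw [star_smul, smul_mul_assoc, mul_smul_comm, smul_smul]
      congr 1
      simp only [Complex.star_def, Complex.conj_ofReal]
      push_cast
      ring
    rw [Finset.sum_congr rfl fun i _ => hst i, ← Finset.smul_sum, hsum, smul_smul]
    have : ((((Real.sqrt (Λ x))⁻¹ * (Real.sqrt (Λ x))⁻¹ : ℝ)) : ℂ) * ((Λ x : ℝ) : ℂ) = 1 := by
      have hr : ((Real.sqrt (Λ x))⁻¹ * (Real.sqrt (Λ x))⁻¹ : ℝ) * Λ x = 1 := by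
        rw [← Real.sqrt_mul_self (hΛpos x).le]
        field_simp
        rw [Real.sq_sqrt (Real.sqrt_nonneg _), div_self (Real.sqrt_ne_zero'.mpr (pow_pos (hΛpos x) 2))]
      exact_mod_cast hr
    rw [this, one_smul]
  · -- q absorbs
    intro i x
    show q x * ((((Real.sqrt (Λ x))⁻¹ : ℝ) : ℂ) • b i x)
        = (((Real.sqrt (Λ x))⁻¹ : ℝ) : ℂ) • b i x
    rw [mul_smul_comm]
    congr 1
    show q x * (v x * star (w i x)) = v x * star (w i x)
    rw [← mul_assoc, hqv x]
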